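/- Let G' = (V,F) be a chordal graph with maximal cliques C₁,...,C_l (and all diagonal entries specified). Any partial symmetric matrix X̄ ∈ Sⁿ(F,?) such that the fully-specified principal submatrix X̄_{C_r C_r} is positive definite for each r = 1,...,l admits a completion to a positive definite matrix. -/

import Mathlib

/-- A simple graph is chordal if every cycle of length at least 4 has a chord. -/
def IsChordal {V : Type*} (G : SimpleGraph V) : Prop :=
  ∀ ⦃v : V⦄ (c : G.Walk v v), c.IsCycle → 4 ≤ c.length →
    ∃ u w : V, u ∈ c.support ∧ w ∈ c.support ∧ G.Adj u w ∧ s(u, w) ∉ c.edges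

/-- A maximal clique (as a finite vertex set). -/
def IsMaximalClique {V : Type*} (G : SimpleGraph V) (s : Finset V) : Prop :=
  G.IsClique (s : Set V) ∧
    ∀ t : Finset V, G.IsClique (t : Set V) → s ⊆ t → s = t

/-- The fully specified principal submatrix of `X` on a finite index set `s`. -/
def principalSubmatrix {n : ℕ} (X : Matrix (Fin n) (Fin n) ℝ) (s : Finset (Fin n)) :
    Matrix {i // i ∈ s} {i // i ∈ s} ℝ :=
  X.submatrix (fun i => (i : Fin n)) (fun i => (i : Fin n))

open Matrix

set_option linter.unusedSectionVars false
section MatrixLemmas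

variable {m k : Type*} [Fintype m] [Fintype k]

lemma isHermitian_of_isSymm {X : Matrix m m ℝ} (h : X.IsSymm) : X.IsHermitian := by
  rwa [Matrix.IsHermitian, conjTranspose_eq_transpose_of_trivial]

lemma posDef_submatrix_inj {M : Matrix m m ℝ} (hM : M.PosDef) {f : k → m}
    (hf : Function.Injective f) : (M.submatrix f f).PosDef := by
  classical
  refine Matrix.PosDef.of_dotProduct_mulVec_pos ?_ (fun x hx => ?_)
  · have h1 := hM.1
    rw [Matrix.IsHermitian, conjTranspose_submatrix, h1.eq]
  · -- extend x by zero
    set x' : m → ℝ := fun j => if h : ∃ i, f i = j then x h.choose else 0 with hx'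
    have hx'f : ∀ i, x' (f i) = x i := by
      intro i
      have h : ∃ i', f i' = f i := ⟨i, rfl⟩
      simp only [hx', dif_pos h]
      exact congrArg x (hf h.choose_spec)
    have hx'0 : ∀ j, j ∉ Finset.univ.image f → x' j = 0 := by
      intro j hj
      have : ¬ ∃ i, f i = j := by
        rintro ⟨i, rfl⟩
        exact hj (Finset.mem_image_of_mem f (Finset.mem_univ i))
      simp only [hx', dif_neg this]
    have key : ∀ g : m → ℝ, ∑ j, g j * x' j = ∑ i, g (f i) * x i := by
      intro g
      rw [← Finset.sum_subset (Finset.subset_univ (Finset.univ.image f))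
        (fun j _ hj => by rw [hx'0 j hj, mul_zero])]
      rw [Finset.sum_image (fun i _ i' _ h => hf h)]
      exact Finset.sum_congr rfl fun i _ => by rw [hx'f]
    have hMx' : ∀ j, (M *ᵥ x') j = ∑ i, M j (f i) * x i := by
      intro j
      simp only [Matrix.mulVec, dotProduct]
      exact key (fun l => M j l)
    have hx'ne : x' ≠ 0 := by
      obtain ⟨i, hi⟩ := Function.ne_iff.mp hx
      intro h0
      exact hi (by rw [← hx'f i, h0]; rfl)
    have := hM.dotProduct_mulVec_pos hx'ne
    have heq : dotProduct (star x') (M *ᵥ x') =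
        dotProduct (star x) ((M.submatrix f f) *ᵥ x) := by
      simp only [star_trivial, dotProduct]
      calc ∑ j, x' j * (M *ᵥ x') j = ∑ j, (M *ᵥ x') j * x' j := by simp_rw [mul_comm]
        _ = ∑ i, (M *ᵥ x') (f i) * x i := key _
        _ = ∑ i, x i * ((M.submatrix f f) *ᵥ x) i := by
            refine Finset.sum_congr rfl fun i _ => ?_
            rw [hMx', mul_comm]
            simp [Matrix.mulVec, dotProduct, Matrix.submatrix_apply]
    rw [← heq]
    exact this

end MatrixLemmas


open Matrix
set_option linter.unusedSectionVars false
set_option maxHeartbeats 800000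

section Border

open scoped Matrix

lemma posDef_fromBlocks₁₁' {m n : Type*} [Fintype m] [DecidableEq m] [Fintype n]
    {A : Matrix m m ℝ} (B : Matrix m n ℝ) (D : Matrix n n ℝ) (hA : A.PosDef) :
    (Matrix.fromBlocks A B Bᴴ D).PosDef ↔ (D - Bᴴ * A⁻¹ * B).PosDef := by
  haveI := hA.isUnit.invertible
  rw [Matrix.posDef_iff_dotProduct_mulVec, Matrix.posDef_iff_dotProduct_mulVec]
  constructor
  · rintro ⟨h, hq⟩
    refine ⟨(Matrix.IsHermitian.fromBlocks₁₁ _ _ hA.1).mp h, fun y hy => ?_⟩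
    have hne : (Sum.elim (-((A⁻¹ * B) *ᵥ y)) y) ≠ 0 := by
      intro h0
      apply hy
      funext j; exact congrFun h0 (Sum.inr j)
    have h2 := hq hne
    rw [Matrix.dotProduct_mulVec, Matrix.schur_complement_eq₁₁ B D _ _ hA.1,
      neg_add_cancel] at h2
    simpa [Matrix.dotProduct_mulVec] using h2
  · rintro hS
    refine ⟨(Matrix.IsHermitian.fromBlocks₁₁ _ _ hA.1).mpr hS.1, fun x hx => ?_⟩
    rw [Matrix.dotProduct_mulVec, ← Sum.elim_comp_inl_inr x,
      Matrix.schur_complement_eq₁₁ B D _ _ hA.1]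
    by_cases hxr : x ∘ Sum.inr = 0
    · have hxl : x ∘ Sum.inl ≠ 0 := by
        intro h0
        apply hx
        funext i
        cases i with
        | inl i => exact congrFun h0 i
        | inr i => exact congrFun hxr i
      rw [hxr]
      have h1 := hA.dotProduct_mulVec_pos (by rw [mulVec_zero, add_zero]; exact hxl :
        (x ∘ Sum.inl + (A⁻¹ * B) *ᵥ (0 : n → ℝ)) ≠ 0)
      rw [Matrix.dotProduct_mulVec] at h1
      simpa using h1
    · have h1 : (0:ℝ) ≤ star (x ∘ Sum.inl + (A⁻¹ * B) *ᵥ (x ∘ Sum.inr)) ᵥ* A ⬝ᵥ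
          (x ∘ Sum.inl + (A⁻¹ * B) *ᵥ (x ∘ Sum.inr)) := by
        rw [← Matrix.dotProduct_mulVec]
        exact hA.posSemidef.dotProduct_mulVec_nonneg _
      have h2 : (0:ℝ) < star (x ∘ Sum.inr) ᵥ* (D - Bᴴ * A⁻¹ * B) ⬝ᵥ (x ∘ Sum.inr) := by
        rw [← Matrix.dotProduct_mulVec]
        exact hS.2 hxr
      exact add_pos_of_nonneg_of_pos h1 h2

lemma posDef_unit_iff {M : Matrix Unit Unit ℝ} : M.PosDef ↔ 0 < M () () := by
  constructor
  · intro h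
    have := h.dotProduct_mulVec_pos (x := fun _ => 1) (by intro h0; simpa using congrFun h0 ())
    simpa [dotProduct, Matrix.mulVec] using this
  · intro h
    refine Matrix.PosDef.of_dotProduct_mulVec_pos ?_ (fun x hx => ?_)
    · ext i j
      simp [Matrix.conjTranspose_apply]
    · have hx0 : x () ≠ 0 := fun h0 => hx (funext fun i => by cases i; exact h0)
      have he : dotProduct (star x) (M *ᵥ x) = M () () * (x () * x ()) := by
        simp [dotProduct, Matrix.mulVec]
        ring
      rw [he]
      exact mul_pos h (mul_self_pos.mpr hx0)

lemma inv_symm {m : Type*} [Fintype m] [DecidableEq m] {M : Matrix m m ℝ}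
    (hMs : M.IsSymm) : M⁻¹.IsSymm := by
  rw [Matrix.IsSymm, Matrix.transpose_nonsing_inv, hMs.eq]

lemma entry_calc {m : Type*} [Fintype m] [DecidableEq m] (M : Matrix m m ℝ)
    (hMs : M.IsSymm) (v : m → ℝ) :
    (((Matrix.of fun i (_ : Unit) => v i)ᴴ * M⁻¹ * (Matrix.of fun i (_ : Unit) => v i)) () ())
      = (M⁻¹ *ᵥ v) ⬝ᵥ v := by
  have hsym := inv_symm hMs
  simp only [Matrix.mul_apply, Matrix.conjTranspose_apply, Matrix.of_apply,
    dotProduct, Matrix.mulVec, star_trivial, Finset.sum_mul]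
  rw [Finset.sum_comm]
  exact Finset.sum_congr rfl fun j _ => Finset.sum_congr rfl fun i _ => by ring

lemma border_lemma {m : Type*} [Fintype m] [DecidableEq m] {Y : Matrix m m ℝ}
    (hY : Y.PosDef) (hYs : Y.IsSymm) (s : Finset m) (b : {i // i ∈ s} → ℝ) (a : ℝ)
    (hblock : (Matrix.fromBlocks (Y.submatrix (Subtype.val : {i // i ∈ s} → m) Subtype.val)
        (Matrix.of fun u (_ : Unit) => b u)
        (Matrix.of fun (_ : Unit) u => b u)
        (Matrix.of fun _ _ => a)).PosDef) :
    ∃ y : m → ℝ, (∀ u : {i // i ∈ s}, y ↑u = b u) ∧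
      (Matrix.fromBlocks Y (Matrix.of fun i (_ : Unit) => y i)
        (Matrix.of fun (_ : Unit) i => y i) (Matrix.of fun _ _ => a)).PosDef := by
  classical
  set B := Y.submatrix (Subtype.val : {i // i ∈ s} → m) Subtype.val with hBdef
  have hB : B.PosDef := posDef_submatrix_inj hY Subtype.val_injective
  have hBs : B.IsSymm := by
    rw [Matrix.IsSymm, hBdef, Matrix.transpose_submatrix, hYs.eq]
  haveI := hB.isUnit.invertible
  haveI := hY.isUnit.invertible
  set zs : {i // i ∈ s} → ℝ := B⁻¹ *ᵥ b with hzs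
  set z : m → ℝ := fun j => if h : j ∈ s then zs ⟨j, h⟩ else 0 with hz
  set y : m → ℝ := Y *ᵥ z with hy
  have hzsum : ∀ g : m → ℝ, ∑ j, g j * z j = ∑ u : {i // i ∈ s}, g ↑u * zs u := by
    intro g
    rw [← Finset.sum_subset s.subset_univ
      (fun j _ hj => by simp only [hz, dif_neg hj, mul_zero]),
      ← Finset.sum_coe_sort s (fun j => g j * z j)]
    exact Finset.sum_congr rfl fun u _ => by simp only [hz, dif_pos u.2]
  have hyu : ∀ u : {i // i ∈ s}, y ↑u = b u := by
    intro u
    have h1 : y ↑u = ∑ j, Y ↑u j * z j := rfl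
    rw [h1, hzsum (fun j => Y ↑u j)]
    have h2 : ∑ u' : {i // i ∈ s}, Y ↑u ↑u' * zs u' = (B *ᵥ zs) u := rfl
    rw [h2, hzs, Matrix.mulVec_mulVec, Matrix.mul_nonsing_inv _ (isUnit_iff_ne_zero.mpr hB.det_pos.ne'),
      Matrix.one_mulVec]
  refine ⟨y, hyu, ?_⟩
  have hrow : (Matrix.of fun (_ : Unit) i => y i) = (Matrix.of fun i (_ : Unit) => y i)ᴴ := by
    ext i j; simp [Matrix.conjTranspose_apply]
  rw [hrow, posDef_fromBlocks₁₁' _ _ hY, posDef_unit_iff]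
  have hYinvy : Y⁻¹ *ᵥ y = z := by
    rw [hy, Matrix.mulVec_mulVec,
      Matrix.nonsing_inv_mul _ (isUnit_iff_ne_zero.mpr hY.det_pos.ne'), Matrix.one_mulVec]
  rw [Matrix.sub_apply, entry_calc Y hYs y, hYinvy]
  have hzy : z ⬝ᵥ y = b ⬝ᵥ zs := by
    have h3 : z ⬝ᵥ y = ∑ j, y j * z j := by
      simp [dotProduct, mul_comm]
    rw [h3, hzsum y]
    exact Finset.sum_congr rfl fun u _ => by rw [hyu u]
  rw [hzy]
  have hbrow : (Matrix.of fun (_ : Unit) u => b u) = (Matrix.of fun u (_ : Unit) => b u)ᴴ := by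
    ext i j; simp [Matrix.conjTranspose_apply]
  rw [hbrow, posDef_fromBlocks₁₁' _ _ hB, posDef_unit_iff, Matrix.sub_apply,
    entry_calc B hBs b] at hblock
  simp only [Matrix.of_apply] at hblock ⊢
  rw [hzs]
  rwa [dotProduct_comm] at hblock

end Border

section Graph

open SimpleGraph
variable {V : Type*} {G : SimpleGraph V}


lemma adj_of_length_one {x y : V} {p : G.Walk x y} (h : p.length = 1) : G.Adj x y := by
  cases p with
  | nil => simp at h
  | cons hadj q =>
    rw [SimpleGraph.Walk.length_cons] at h
    have h0 : q.length = 0 := by omega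
    have := SimpleGraph.Walk.eq_of_length_eq_zero h0
    exact this ▸ hadj

lemma edge_mem_of_length_one {x y : V} {p : G.Walk x y} (h : p.length = 1) :
    s(x, y) ∈ p.edges := by
  cases p with
  | nil => simp at h
  | cons hadj q =>
    rw [SimpleGraph.Walk.length_cons] at h
    have h0 : q.length = 0 := by omega
    have h2 := SimpleGraph.Walk.eq_of_length_eq_zero h0
    subst h2
    simp [SimpleGraph.Walk.edges_cons]

/-- Shortcut lemma: a walk containing two adjacent vertices whose edge is not
on the walk can be shortened. -/
lemma shortcut {x y u w : V} {p : G.Walk x y} (hu : u ∈ p.support) (hw : w ∈ p.support)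
    (hadj : G.Adj u w) (he : s(u, w) ∉ p.edges) :
    ∃ q : G.Walk x y, q.length < p.length ∧ ∀ z ∈ q.support, z ∈ p.support := by
  classical
  set t := p.takeUntil u hu with ht
  set d := p.dropUntil u hu with hd
  have hsplit : t.append d = p := p.take_spec hu
  have hlen : t.length + d.length = p.length := by
    rw [← hsplit, SimpleGraph.Walk.length_append]
  have hwmem : w ∈ t.support ∨ w ∈ d.support := by
    rw [← hsplit] at hw
    exact (SimpleGraph.Walk.mem_support_append_iff _ _).mp hw
  cases hwmem with
  | inr hwd =>
    set d2 := d.dropUntil w hwd with hd2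
    set d1 := d.takeUntil w hwd with hd1
    have hdsplit : d1.append d2 = d := d.take_spec hwd
    have hdlen : d1.length + d2.length = d.length := by
      rw [← hdsplit, SimpleGraph.Walk.length_append]
    have hd1len : 2 ≤ d1.length := by
      rcases Nat.lt_or_ge d1.length 2 with h2 | h2
      · have h01 : d1.length = 0 ∨ d1.length = 1 := by omega
        rcases h01 with h | h
        · exact absurd (SimpleGraph.Walk.eq_of_length_eq_zero h) hadj.ne
        · exact absurd (SimpleGraph.Walk.edges_dropUntil_subset p hu
            (SimpleGraph.Walk.edges_takeUntil_subset d hwd (edge_mem_of_length_one h))) he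
      · exact h2
    refine ⟨t.append (SimpleGraph.Walk.cons hadj d2), ?_, ?_⟩
    · rw [SimpleGraph.Walk.length_append, SimpleGraph.Walk.length_cons]
      omega
    · intro z hz
      rcases (SimpleGraph.Walk.mem_support_append_iff _ _).mp hz with h | h
      · exact SimpleGraph.Walk.support_takeUntil_subset p hu h
      · rw [SimpleGraph.Walk.support_cons] at h
        rcases List.mem_cons.mp h with rfl | h
        · exact hu
        · exact SimpleGraph.Walk.support_dropUntil_subset p hu
            (SimpleGraph.Walk.support_dropUntil_subset d hwd h)
  | inl hwt =>
    set t1 := t.takeUntil w hwt with ht1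
    set t2 := t.dropUntil w hwt with ht2
    have htsplit : t1.append t2 = t := t.take_spec hwt
    have htlen : t1.length + t2.length = t.length := by
      rw [← htsplit, SimpleGraph.Walk.length_append]
    have ht2len : 2 ≤ t2.length := by
      rcases Nat.lt_or_ge t2.length 2 with h2 | h2
      · have h01 : t2.length = 0 ∨ t2.length = 1 := by omega
        rcases h01 with h | h
        · exact absurd (SimpleGraph.Walk.eq_of_length_eq_zero h).symm hadj.ne
        · refine absurd (SimpleGraph.Walk.edges_takeUntil_subset p hu
            (SimpleGraph.Walk.edges_dropUntil_subset t hwt (edge_mem_of_length_one h))) ?_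
          rwa [Sym2.eq_swap] at he
      · exact h2
    refine ⟨t1.append (SimpleGraph.Walk.cons hadj.symm d), ?_, ?_⟩
    · rw [SimpleGraph.Walk.length_append, SimpleGraph.Walk.length_cons]
      omega
    · intro z hz
      rcases (SimpleGraph.Walk.mem_support_append_iff _ _).mp hz with h | h
      · exact SimpleGraph.Walk.support_takeUntil_subset p hu
          (SimpleGraph.Walk.support_takeUntil_subset t hwt h)
      · rw [SimpleGraph.Walk.support_cons] at h
        rcases List.mem_cons.mp h with rfl | h
        · exact SimpleGraph.Walk.support_takeUntil_subset p hu hwt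
        · exact SimpleGraph.Walk.support_dropUntil_subset p hu h

lemma chordal_induce {s : Set V} (h : IsChordal G) : IsChordal (G.induce s) := by
  intro v c hc hlen
  have hinj : Function.Injective (SimpleGraph.Embedding.induce s (G := G)).toHom :=
    (SimpleGraph.Embedding.induce s (G := G)).injective
  have hc' : (c.map (SimpleGraph.Embedding.induce s (G := G)).toHom).IsCycle :=
    (SimpleGraph.Walk.map_isCycle_iff_of_injective hinj).mpr hc
  have hlen' : 4 ≤ (c.map (SimpleGraph.Embedding.induce s (G := G)).toHom).length := by
    rwa [SimpleGraph.Walk.length_map]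
  obtain ⟨u, w, hu, hw, hadj, he⟩ := h _ hc' hlen'
  rw [SimpleGraph.Walk.support_map] at hu hw
  obtain ⟨u', hu', rfl⟩ := List.mem_map.mp hu
  obtain ⟨w', hw', rfl⟩ := List.mem_map.mp hw
  refine ⟨u', w', hu', hw', ?_, ?_⟩
  · exact hadj
  · intro hmem
    apply he
    rw [SimpleGraph.Walk.edges_map]
    exact List.mem_map.mpr ⟨s(u', w'), hmem, by simp⟩
end Graph

section Separator

open SimpleGraph
variable {V : Type*} {G : SimpleGraph V}

/-- `z` is reachable from `a` by a walk avoiding `S`. -/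
def Reach (G : SimpleGraph V) (S : Finset V) (a z : V) : Prop :=
  ∃ p : G.Walk a z, ∀ x ∈ p.support, x ∉ S

/-- `S` separates `a` from `b`. -/
def IsSep (G : SimpleGraph V) (a b : V) (S : Finset V) : Prop :=
  a ∉ S ∧ b ∉ S ∧ ∀ p : G.Walk a b, ∃ x ∈ p.support, x ∈ S

lemma reach_refl {S : Finset V} {a : V} (ha : a ∉ S) : Reach G S a a :=
  ⟨SimpleGraph.Walk.nil, by simp [ha]⟩

lemma reach_not_mem {S : Finset V} {a z : V} (h : Reach G S a z) : z ∉ S := by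
  obtain ⟨p, hp⟩ := h
  exact hp z p.end_mem_support

lemma reach_start_not_mem {S : Finset V} {a z : V} (h : Reach G S a z) : a ∉ S := by
  obtain ⟨p, hp⟩ := h
  exact hp a p.start_mem_support

lemma reach_of_mem_support [DecidableEq V] {S : Finset V} {a z u : V} (h : Reach G S a z)
    {p : G.Walk a z} (hp : ∀ x ∈ p.support, x ∉ S) (hu : u ∈ p.support) : Reach G S a u :=
  ⟨p.takeUntil u hu, fun x hx => hp x (p.support_takeUntil_subset hu hx)⟩

lemma reach_adj {S : Finset V} {a u z : V} (h : Reach G S a u) (hadj : G.Adj u z)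
    (hz : z ∉ S) : Reach G S a z := by
  obtain ⟨p, hp⟩ := h
  refine ⟨p.append (SimpleGraph.Walk.cons hadj SimpleGraph.Walk.nil), fun x hx => ?_⟩
  rcases (SimpleGraph.Walk.mem_support_append_iff _ _).mp hx with h | h
  · exact hp x h
  · rw [SimpleGraph.Walk.support_cons] at h
    rcases List.mem_cons.mp h with rfl | h
    · exact hp x p.end_mem_support
    · simp only [SimpleGraph.Walk.support_nil, List.mem_singleton] at h
      subst h; exact hz

lemma not_adj_of_reach {S : Finset V} {a b u w : V} (hS : IsSep G a b S)
    (hu : Reach G S a u) (hw : Reach G S b w) : ¬ G.Adj u w := by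
  intro hadj
  obtain ⟨p, hp⟩ := hu
  obtain ⟨q, hq⟩ := hw
  obtain ⟨z, hz, hzS⟩ := hS.2.2 (p.append (SimpleGraph.Walk.cons hadj q.reverse))
  rcases (SimpleGraph.Walk.mem_support_append_iff _ _).mp hz with h | h
  · exact hp z h hzS
  · rw [SimpleGraph.Walk.support_cons] at h
    rcases List.mem_cons.mp h with rfl | h
    · exact hp z p.end_mem_support hzS
    · rw [SimpleGraph.Walk.support_reverse, List.mem_reverse] at h
      exact hq z h hzS

lemma ne_of_reach {S : Finset V} {a b u w : V} (hS : IsSep G a b S)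
    (hu : Reach G S a u) (hw : Reach G S b w) : u ≠ w := by
  rintro rfl
  obtain ⟨p, hp⟩ := hu
  obtain ⟨q, hq⟩ := hw
  obtain ⟨z, hz, hzS⟩ := hS.2.2 (p.append q.reverse)
  rcases (SimpleGraph.Walk.mem_support_append_iff _ _).mp hz with h | h
  · exact hp z h hzS
  · rw [SimpleGraph.Walk.support_reverse, List.mem_reverse] at h
    exact hq z h hzS

lemma sep_exists [Fintype V] [DecidableEq V] {a b : V} (hab : a ≠ b) (hnadj : ¬ G.Adj a b) :
    IsSep G a b (Finset.univ \ {a, b}) := by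
  refine ⟨by simp, by simp, fun p => ?_⟩
  have hpath := p.bypass_isPath
  have h0 : p.bypass.length ≠ 0 := fun h => hab (SimpleGraph.Walk.eq_of_length_eq_zero h)
  have h1 : p.bypass.length ≠ 1 := fun h => hnadj (adj_of_length_one h)
  have hsl : 3 ≤ p.bypass.support.length := by
    rw [SimpleGraph.Walk.length_support]; omega
  have hzex : ∃ z ∈ p.bypass.support, z ∉ ({a, b} : Finset V) := by
    by_contra hcon
    push_neg at hcon
    have hsub : p.bypass.support.toFinset ⊆ ({a, b} : Finset V) := fun z hz =>
      hcon z (List.mem_toFinset.mp hz)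
    have hcard := Finset.card_le_card hsub
    rw [List.toFinset_card_of_nodup hpath.support_nodup] at hcard
    have h2 : ({a, b} : Finset V).card ≤ 2 :=
      (Finset.card_insert_le _ _).trans (by simp)
    omega
  obtain ⟨z, hz, hznot⟩ := hzex
  refine ⟨z, p.support_bypass_subset hz, ?_⟩
  simp only [Finset.mem_sdiff, Finset.mem_univ, true_and]
  exact hznot

lemma min_sep_exists [Fintype V] [DecidableEq V] {a b : V} (hab : a ≠ b)
    (hnadj : ¬ G.Adj a b) :
    ∃ S : Finset V, IsSep G a b S ∧ ∀ S', IsSep G a b S' → S' ⊆ S → S' = S := by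
  have hfin : {S : Finset V | IsSep G a b S}.Finite := Set.toFinite _
  obtain ⟨S, hSmem, hSmin⟩ := Set.Finite.exists_minimalFor id _ hfin
    ⟨_, sep_exists hab hnadj⟩
  exact ⟨S, hSmem, fun S' hS' hsub => Finset.Subset.antisymm hsub (hSmin hS' hsub)⟩

lemma min_sep_neighbor [Fintype V] [DecidableEq V] {a b : V} {S : Finset V}
    (hS : IsSep G a b S) (hmin : ∀ S', IsSep G a b S' → S' ⊆ S → S' = S)
    {x : V} (hx : x ∈ S) : ∃ a', Reach G S a a' ∧ G.Adj a' x := by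
  have hne : S.erase x ≠ S := fun h => (h ▸ Finset.notMem_erase x S) hx
  have hnotsep : ¬ IsSep G a b (S.erase x) := fun h => hne (hmin _ h (Finset.erase_subset x S))
  have haerase : a ∉ S.erase x := fun h => hS.1 (Finset.mem_of_mem_erase h)
  have hberase : b ∉ S.erase x := fun h => hS.2.1 (Finset.mem_of_mem_erase h)
  rw [IsSep] at hnotsep
  push_neg at hnotsep
  obtain ⟨p, hp⟩ := hnotsep haerase hberase
  have hxp : x ∈ p.support := by
    obtain ⟨z, hz, hzS⟩ := hS.2.2 p
    have := hp z hz
    have hzx : z = x := by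
      by_contra hne'
      exact this (Finset.mem_erase.mpr ⟨hne', hzS⟩)
    exact hzx ▸ hz
  set t := p.takeUntil x hxp with htdef
  have htlen : t.length ≠ 0 := by
    intro h
    have : a = x := SimpleGraph.Walk.eq_of_length_eq_zero h
    exact hS.1 (this ▸ hx)
  have hcount : t.support.count x = 1 := p.count_support_takeUntil_eq_one hxp
  rcases hrev : t.reverse with _ | @⟨_, a', _, hadj, q⟩
  · exfalso
    apply htlen
    have := congrArg SimpleGraph.Walk.length hrev
    rw [SimpleGraph.Walk.length_reverse] at this
    simpa using this
  · 
    have hxq : x ∉ q.support := by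
      have h1 : t.reverse.support = x :: q.support := by rw [hrev, SimpleGraph.Walk.support_cons]
      have h2 : t.reverse.support.count x = 1 := by
        rw [SimpleGraph.Walk.support_reverse, List.count_reverse]
        exact hcount
      rw [h1, List.count_cons_self] at h2
      have : q.support.count x = 0 := by omega
      exact List.count_eq_zero.mp this
    have hqS : ∀ z ∈ q.support, z ∉ S := by
      intro z hz
      have hzt : z ∈ t.support := by
        have : z ∈ t.reverse.support := by
          rw [hrev, SimpleGraph.Walk.support_cons]
          exact List.mem_cons_of_mem _ hz
        rwa [SimpleGraph.Walk.support_reverse, List.mem_reverse] at this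
      have hzp : z ∈ p.support := p.support_takeUntil_subset hxp hzt
      have := hp z hzp
      intro hzS
      have hzx : z ≠ x := fun h => hxq (h ▸ hz)
      exact this (Finset.mem_erase.mpr ⟨hzx, hzS⟩)
    refine ⟨a', ⟨q.reverse, fun z hz => ?_⟩, hadj.symm⟩
    rw [SimpleGraph.Walk.support_reverse, List.mem_reverse] at hz
    exact hqS z hz

end Separator

section CliqueSep

open SimpleGraph
variable {V : Type*} {G : SimpleGraph V}

lemma isSep_symm {a b : V} {S : Finset V} (h : IsSep G a b S) : IsSep G b a S := by
  refine ⟨h.2.1, h.1, fun p => ?_⟩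
  obtain ⟨z, hz, hzS⟩ := h.2.2 p.reverse
  rw [SimpleGraph.Walk.support_reverse, List.mem_reverse] at hz
  exact ⟨z, hz, hzS⟩

lemma side_walk_exists [Fintype V] [DecidableEq V] {a b x y : V} {S : Finset V}
    (hS : IsSep G a b S) (hmin : ∀ S', IsSep G a b S' → S' ⊆ S → S' = S)
    (hx : x ∈ S) (hy : y ∈ S) :
    ∃ p : G.Walk x y, ∀ z ∈ p.support, z = x ∨ z = y ∨ Reach G S a z := by
  obtain ⟨a1, ha1r, ha1x⟩ := min_sep_neighbor hS hmin hx
  obtain ⟨a2, ha2r, ha2y⟩ := min_sep_neighbor hS hmin hy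
  obtain ⟨p1, hp1⟩ := ha1r
  obtain ⟨p2, hp2⟩ := ha2r
  refine ⟨SimpleGraph.Walk.cons ha1x.symm ((p1.reverse.append p2).append
    (SimpleGraph.Walk.cons ha2y SimpleGraph.Walk.nil)), fun z hz => ?_⟩
  rw [SimpleGraph.Walk.support_cons] at hz
  rcases List.mem_cons.mp hz with rfl | hz
  · exact Or.inl rfl
  rcases (SimpleGraph.Walk.mem_support_append_iff _ _).mp hz with hz | hz
  · rcases (SimpleGraph.Walk.mem_support_append_iff _ _).mp hz with hz | hz
    · right; right
      rw [SimpleGraph.Walk.support_reverse, List.mem_reverse] at hz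
      exact ⟨p1.takeUntil z hz, fun w hw => hp1 w (p1.support_takeUntil_subset hz hw)⟩
    · right; right
      exact ⟨p2.takeUntil z hz, fun w hw => hp2 w (p2.support_takeUntil_subset hz hw)⟩
  · rw [SimpleGraph.Walk.support_cons] at hz
    rcases List.mem_cons.mp hz with rfl | hz
    · right; right; exact ⟨p2, hp2⟩
    · simp only [SimpleGraph.Walk.support_nil, List.mem_singleton] at hz
      exact Or.inr (Or.inl hz)

lemma minimal_side_path [Fintype V] [DecidableEq V] {a b x y : V} {S : Finset V}
    (hS : IsSep G a b S) (hmin : ∀ S', IsSep G a b S' → S' ⊆ S → S' = S)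
    (hx : x ∈ S) (hy : y ∈ S) :
    ∃ p : G.Walk x y, (∀ z ∈ p.support, z = x ∨ z = y ∨ Reach G S a z) ∧ p.IsPath ∧
      ∀ q : G.Walk x y, (∀ z ∈ q.support, z = x ∨ z = y ∨ Reach G S a z) →
        p.length ≤ q.length := by
  classical
  obtain ⟨p0, hp0⟩ := side_walk_exists hS hmin hx hy
  have hex : ∃ n, ∃ p : G.Walk x y,
      (∀ z ∈ p.support, z = x ∨ z = y ∨ Reach G S a z) ∧ p.length = n :=
    ⟨p0.length, p0, hp0, rfl⟩
  obtain ⟨p1, hp1, hlen1⟩ := Nat.find_spec hex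
  refine ⟨p1.bypass, fun z hz => hp1 z (p1.support_bypass_subset hz), p1.bypass_isPath, ?_⟩
  intro q hq
  calc p1.bypass.length ≤ p1.length := p1.length_bypass_le
    _ = Nat.find hex := hlen1
    _ ≤ q.length := Nat.find_min' hex ⟨q, hq, rfl⟩

lemma min_sep_clique [Fintype V] [DecidableEq V] {a b : V} {S : Finset V}
    (hch : IsChordal G) (hS : IsSep G a b S)
    (hmin : ∀ S', IsSep G a b S' → S' ⊆ S → S' = S)
    {x y : V} (hx : x ∈ S) (hy : y ∈ S) (hxy : x ≠ y) : G.Adj x y := by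
  by_contra hnadj
  obtain ⟨pA, hPA, hApath, hminA⟩ := minimal_side_path hS hmin hx hy
  have hS' := isSep_symm hS
  have hmin' : ∀ S', IsSep G b a S' → S' ⊆ S → S' = S := fun S' h hs =>
    hmin S' (isSep_symm h) hs
  obtain ⟨pB, hPB, hBpath, hminB⟩ := minimal_side_path hS' hmin' hx hy
  -- lengths at least 2
  have hlA0 : pA.length ≠ 0 := fun h => hxy (SimpleGraph.Walk.eq_of_length_eq_zero h)
  have hlA1 : pA.length ≠ 1 := fun h => hnadj (adj_of_length_one h)
  have hlB0 : pB.length ≠ 0 := fun h => hxy (SimpleGraph.Walk.eq_of_length_eq_zero h)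
  have hlB1 : pB.length ≠ 1 := fun h => hnadj (adj_of_length_one h)
  -- reach facts
  have hAB : ∀ z, Reach G S a z → Reach G S b z → False := fun z h1 h2 =>
    ne_of_reach hS h1 h2 rfl
  have hcommon : ∀ z, z ∈ pA.support → z ∈ pB.support → z = x ∨ z = y := by
    intro z hzA hzB
    rcases hPA z hzA with h | h | h
    · exact Or.inl h
    · exact Or.inr h
    rcases hPB z hzB with h' | h' | h'
    · exact Or.inl h'
    · exact Or.inr h'
    exact absurd (hAB z h h') (fun f => f)
  have hedge : ∀ u w : V, s(u, w) ∈ pA.edges → s(u, w) ∈ pB.edges → False := by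
    intro u w h1 h2
    have hadj := pA.adj_of_mem_edges h1
    have huA := pA.fst_mem_support_of_mem_edges h1
    have hwA := pA.snd_mem_support_of_mem_edges h1
    have huB := pB.fst_mem_support_of_mem_edges h2
    have hwB := pB.snd_mem_support_of_mem_edges h2
    rcases hcommon u huA huB with rfl | rfl <;> rcases hcommon w hwA hwB with rfl | rfl
    · exact hadj.ne rfl
    · exact hnadj hadj
    · exact hnadj hadj.symm
    · exact hadj.ne rfl
  -- the cycle
  set c : G.Walk x x := pA.append pB.reverse with hcdef
  have hclen : c.length = pA.length + pB.length := by
    rw [hcdef, SimpleGraph.Walk.length_append, SimpleGraph.Walk.length_reverse]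
  have hxtailA : x ∉ pA.support.tail := by
    have := hApath.support_nodup
    rw [pA.support_eq_cons] at this
    exact (List.nodup_cons.mp this).1
  have hytailB : y ∉ pB.reverse.support.tail := by
    have := hBpath.reverse.support_nodup
    rw [pB.reverse.support_eq_cons] at this
    exact (List.nodup_cons.mp this).1
  have hcyc : c.IsCycle := by
    rw [SimpleGraph.Walk.isCycle_def]
    refine ⟨⟨?_⟩, ?_, ?_⟩
    · rw [hcdef, SimpleGraph.Walk.edges_append, SimpleGraph.Walk.edges_reverse,
        List.nodup_append]
      refine ⟨hApath.isTrail.edges_nodup, List.nodup_reverse.mpr hBpath.isTrail.edges_nodup, ?_⟩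
      rintro e he1 _ he2 rfl
      rw [List.mem_reverse] at he2
      revert he1 he2
      induction e using Sym2.ind with
      | _ u w => exact fun he1 he2 => hedge u w he1 he2
    · intro hnil
      have := congrArg SimpleGraph.Walk.length hnil
      rw [hclen, SimpleGraph.Walk.length_nil] at this
      omega
    · rw [hcdef, SimpleGraph.Walk.tail_support_append, List.nodup_append]
      refine ⟨?_, ?_, ?_⟩
      · exact List.Nodup.sublist (List.tail_sublist _) hApath.support_nodup
      · exact List.Nodup.sublist (List.tail_sublist _) hBpath.reverse.support_nodup
      · rintro z hz1 _ hz2 rfl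
        have hzA : z ∈ pA.support := List.mem_of_mem_tail hz1
        have hzB : z ∈ pB.support := by
          have : z ∈ pB.reverse.support := List.mem_of_mem_tail hz2
          rwa [SimpleGraph.Walk.support_reverse, List.mem_reverse] at this
        rcases hcommon z hzA hzB with rfl | rfl
        · exact hxtailA hz1
        · exact hytailB hz2
  have hc4 : 4 ≤ c.length := by rw [hclen]; omega
  obtain ⟨u, w, hu, hw, hadj, he⟩ := hch c hcyc hc4
  have heA : s(u, w) ∉ pA.edges := fun h => he (by
    rw [hcdef, SimpleGraph.Walk.edges_append]
    exact List.mem_append_left _ h)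
  have heB : s(u, w) ∉ pB.edges := fun h => he (by
    rw [hcdef, SimpleGraph.Walk.edges_append]
    refine List.mem_append_right _ ?_
    rw [SimpleGraph.Walk.edges_reverse, List.mem_reverse]
    exact h)
  have hu' : u ∈ pA.support ∨ u ∈ pB.support := by
    rcases (SimpleGraph.Walk.mem_support_append_iff _ _).mp (hcdef ▸ hu) with h | h
    · exact Or.inl h
    · right; rwa [SimpleGraph.Walk.support_reverse, List.mem_reverse] at h
  have hw' : w ∈ pA.support ∨ w ∈ pB.support := by
    rcases (SimpleGraph.Walk.mem_support_append_iff _ _).mp (hcdef ▸ hw) with h | h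
    · exact Or.inl h
    · right; rwa [SimpleGraph.Walk.support_reverse, List.mem_reverse] at h
  have hshortA : ∀ u w : V, u ∈ pA.support → w ∈ pA.support → G.Adj u w →
      s(u, w) ∉ pA.edges → False := by
    intro u w h1 h2 h3 h4
    obtain ⟨q, hql, hqs⟩ := shortcut h1 h2 h3 h4
    exact absurd (hminA q (fun z hz => hPA z (hqs z hz))) (by omega)
  have hshortB : ∀ u w : V, u ∈ pB.support → w ∈ pB.support → G.Adj u w →
      s(u, w) ∉ pB.edges → False := by
    intro u w h1 h2 h3 h4
    obtain ⟨q, hql, hqs⟩ := shortcut h1 h2 h3 h4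
    exact absurd (hminB q (fun z hz => hPB z (hqs z hz))) (by omega)
  by_cases huA : u ∈ pA.support <;> by_cases hwA : w ∈ pA.support
  · exact hshortA u w huA hwA hadj heA
  · have hwB : w ∈ pB.support := by
      rcases hw' with h | h
      · exact absurd h hwA
      · exact h
    by_cases huB : u ∈ pB.support
    · exact hshortB u w huB hwB hadj heB
    · have hru : Reach G S a u := by
        rcases hPA u huA with rfl | rfl | h
        · exact absurd pB.start_mem_support huB
        · exact absurd pB.end_mem_support huB
        · exact h
      have hrw : Reach G S b w := by
        rcases hPB w hwB with rfl | rfl | h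
        · exact absurd pA.start_mem_support hwA
        · exact absurd pA.end_mem_support hwA
        · exact h
      exact not_adj_of_reach hS hru hrw hadj
  · have huB : u ∈ pB.support := by
      rcases hu' with h | h
      · exact absurd h huA
      · exact h
    by_cases hwB : w ∈ pB.support
    · exact hshortB u w huB hwB hadj heB
    · have hrw : Reach G S a w := by
        rcases hPA w hwA with rfl | rfl | h
        · exact absurd pB.start_mem_support hwB
        · exact absurd pB.end_mem_support hwB
        · exact h
      have hru : Reach G S b u := by
        rcases hPB u huB with rfl | rfl | h
        · exact absurd pA.start_mem_support huA
        · exact absurd pA.end_mem_support huA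
        · exact h
      exact not_adj_of_reach hS hrw hru hadj.symm
  · have huB : u ∈ pB.support := by
      rcases hu' with h | h
      · exact absurd h huA
      · exact h
    have hwB : w ∈ pB.support := by
      rcases hw' with h | h
      · exact absurd h hwA
      · exact h
    exact hshortB u w huB hwB hadj heB

end CliqueSep

section Dirac

open SimpleGraph

universe u

def IsSimplicial {V : Type*} (G : SimpleGraph V) (v : V) : Prop :=
  ∀ x y, G.Adj v x → G.Adj v y → x ≠ y → G.Adj x y

lemma side_simp {N : ℕ} {V : Type u} [Fintype V] [DecidableEq V] {G : SimpleGraph V}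
    (hch : IsChordal G) {a b : V} {S : Finset V} (hS : IsSep G a b S)
    (hmin : ∀ S', IsSep G a b S' → S' ⊆ S → S' = S)
    (IH : ∀ (W : Type u) [Fintype W] [DecidableEq W] (H : SimpleGraph W),
      Fintype.card W ≤ N → IsChordal H → ∀ p q : W, p ≠ q → ¬H.Adj p q →
        ∃ u w : W, u ≠ w ∧ ¬H.Adj u w ∧ IsSimplicial H u ∧ IsSimplicial H w)
    (hcard : Fintype.card V ≤ N + 1) :
    ∃ u : V, Reach G S a u ∧ IsSimplicial G u := by
  classical
  set s : Set V := {z | Reach G S a z ∨ z ∈ S} with hsdef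
  have hbs : b ∉ s := by
    rintro (⟨p, hp⟩ | hbS)
    · obtain ⟨z, hz, hzS⟩ := hS.2.2 p
      exact hp z hz hzS
    · exact hS.2.1 hbS
  have hcard' : Fintype.card ↥s ≤ N := by
    have hlt : Fintype.card ↥s < Fintype.card V :=
      Fintype.card_lt_of_injective_of_notMem Subtype.val Subtype.val_injective (b := b)
        (by rintro ⟨⟨z, hz⟩, rfl⟩; exact hbs hz)
    omega
  set G₁ := G.induce s with hG₁
  have hch₁ : IsChordal G₁ := chordal_induce hch
  have hclose : ∀ u : V, Reach G S a u → ∀ x, G.Adj u x → x ∈ s := by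
    intro u hu x hadj
    by_cases hxS : x ∈ S
    · exact Or.inr hxS
    · exact Or.inl (reach_adj hu hadj hxS)
  have transfer : ∀ u : ↥s, Reach G S a ↑u → IsSimplicial G₁ u → IsSimplicial G ↑u := by
    intro u hru hsimp x y hx hy hxy
    have hxs : x ∈ s := hclose _ hru x hx
    have hys : y ∈ s := hclose _ hru y hy
    exact hsimp ⟨x, hxs⟩ ⟨y, hys⟩ hx hy (fun h => hxy (congrArg Subtype.val h))
  by_cases hcomp : ∀ p q : ↥s, p ≠ q → G₁.Adj p q
  · have has : a ∈ s := Or.inl (reach_refl hS.1)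
    refine ⟨a, reach_refl hS.1, ?_⟩
    exact transfer ⟨a, has⟩ (reach_refl hS.1) (fun x y hx hy hxy => hcomp x y hxy)
  · push_neg at hcomp
    obtain ⟨p, q, hpq, hnadjpq⟩ := hcomp
    obtain ⟨u₁, u₂, hne, hnadj12, hs1, hs2⟩ := IH ↥s G₁ hcard' hch₁ p q hpq hnadjpq
    have hor : Reach G S a ↑u₁ ∨ Reach G S a ↑u₂ := by
      by_contra hcon
      push_neg at hcon
      have h1 : (u₁ : V) ∈ S := by
        rcases u₁.2 with h | h
        · exact absurd h hcon.1
        · exact h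
      have h2 : (u₂ : V) ∈ S := by
        rcases u₂.2 with h | h
        · exact absurd h hcon.2
        · exact h
      have hval : (u₁ : V) ≠ (u₂ : V) := fun h => hne (Subtype.ext h)
      exact hnadj12 (min_sep_clique hch hS hmin h1 h2 hval)
    rcases hor with h | h
    · exact ⟨↑u₁, h, transfer u₁ h hs1⟩
    · exact ⟨↑u₂, h, transfer u₂ h hs2⟩

theorem diracAux (N : ℕ) : ∀ (V : Type u) [Fintype V] [DecidableEq V] (G : SimpleGraph V),
    Fintype.card V ≤ N → IsChordal G → ∀ a b : V, a ≠ b → ¬G.Adj a b →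
      ∃ u w : V, u ≠ w ∧ ¬G.Adj u w ∧ IsSimplicial G u ∧ IsSimplicial G w := by
  induction N with
  | zero =>
    intro V _ _ G hcard _ a _ _ _
    haveI : IsEmpty V := by
      rw [← Fintype.card_eq_zero_iff]
      omega
    exact (IsEmpty.false a).elim
  | succ N IH =>
    intro V _ _ G hcard hch a b hne hnadj
    obtain ⟨S, hS, hmin⟩ := min_sep_exists hne hnadj
    obtain ⟨u, hru, hsu⟩ := side_simp hch hS hmin IH hcard
    have hS' := isSep_symm hS
    have hmin' : ∀ S', IsSep G b a S' → S' ⊆ S → S' = S := fun S' h hs =>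
      hmin S' (isSep_symm h) hs
    obtain ⟨w, hrw, hsw⟩ := side_simp hch hS' hmin' IH hcard
    exact ⟨u, w, ne_of_reach hS hru hrw, not_adj_of_reach hS hru hrw, hsu, hsw⟩

theorem exists_simplicial {V : Type u} [Fintype V] [DecidableEq V] {G : SimpleGraph V}
    (hch : IsChordal G) (hne : Nonempty V) : ∃ v, IsSimplicial G v := by
  classical
  by_cases hcomp : ∀ p q : V, p ≠ q → G.Adj p q
  · obtain ⟨v⟩ := hne
    exact ⟨v, fun x y _ _ hxy => hcomp x y hxy⟩
  · push_neg at hcomp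
    obtain ⟨p, q, hpq, hnadj⟩ := hcomp
    obtain ⟨u, _, _, _, hs, _⟩ := diracAux (Fintype.card V) V G le_rfl hch p q hpq hnadj
    exact ⟨u, hs⟩

end Dirac

section Main

open Matrix SimpleGraph

theorem compAux (N : ℕ) : ∀ (V : Type) [Fintype V] [DecidableEq V] (G : SimpleGraph V),
    Fintype.card V ≤ N → IsChordal G → ∀ X : Matrix V V ℝ, X.IsSymm →
    (∀ s : Finset V, G.IsClique (s : Set V) →
      (X.submatrix (Subtype.val : {i // i ∈ s} → V) Subtype.val).PosDef) →
    ∃ Y : Matrix V V ℝ, Y.PosDef ∧ Y.IsSymm ∧ (∀ i, Y i i = X i i) ∧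
      ∀ i j, G.Adj i j → Y i j = X i j := by
  induction N with
  | zero =>
    intro V _ _ G hcard hch X hsym hcl
    haveI : IsEmpty V := by rw [← Fintype.card_eq_zero_iff]; omega
    exact ⟨X, ⟨isHermitian_of_isSymm hsym,
      fun x hx => absurd (Finsupp.ext fun i => (IsEmpty.false i).elim) hx⟩, hsym,
      fun i => rfl, fun i j _ => rfl⟩
  | succ N IH =>
    intro V _ _ G hcard hch X hsym hcl
    classical
    rcases isEmpty_or_nonempty V with hemp | hne
    · exact ⟨X, ⟨isHermitian_of_isSymm hsym,
        fun x hx => absurd (Finsupp.ext fun i => (IsEmpty.false i).elim) hx⟩, hsym,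
        fun i => rfl, fun i j _ => rfl⟩
    obtain ⟨v, hv⟩ := exists_simplicial hch hne
    set s : Set V := {u | u ≠ v} with hsdef
    set G' := G.induce s with hG'
    have hch' : IsChordal G' := chordal_induce hch
    have hcard' : Fintype.card ↥s ≤ N := by
      have hlt : Fintype.card ↥s < Fintype.card V :=
        Fintype.card_lt_of_injective_of_notMem (Subtype.val : ↥s → V)
          Subtype.val_injective (b := v) (by rintro ⟨⟨z, hz⟩, hzv⟩; exact hz hzv)
      omega
    set X' : Matrix ↥s ↥s ℝ := X.submatrix Subtype.val Subtype.val with hX'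
    have hsym' : X'.IsSymm := by
      rw [Matrix.IsSymm, hX', Matrix.transpose_submatrix, hsym.eq]
    have hcl' : ∀ t : Finset ↥s, G'.IsClique (t : Set ↥s) →
        (X'.submatrix (Subtype.val : {i // i ∈ t} → ↥s) Subtype.val).PosDef := by
      intro t ht
      set t' : Finset V := t.image Subtype.val with ht'
      have htc : G.IsClique (t' : Set V) := by
        intro p hp q hq hpq
        simp only [ht', Finset.coe_image, Set.mem_image, Finset.mem_coe] at hp hq
        obtain ⟨p', hp', rfl⟩ := hp
        obtain ⟨q', hq', rfl⟩ := hq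
        have hne' : p' ≠ q' := fun h => hpq (congrArg _ h)
        exact ht hp' hq' hne'
      have hPD := hcl t' htc
      have hre : X'.submatrix (Subtype.val : {i // i ∈ t} → ↥s) Subtype.val =
          (X.submatrix (Subtype.val : {i // i ∈ t'} → V) Subtype.val).submatrix
            (fun i : {i // i ∈ t} =>
              (⟨((i : ↥s) : V), Finset.mem_image_of_mem _ i.2⟩ : {j // j ∈ t'}))
            (fun i : {i // i ∈ t} =>
              (⟨((i : ↥s) : V), Finset.mem_image_of_mem _ i.2⟩ : {j // j ∈ t'})) := by
        ext i j
        rfl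
      rw [hre]
      refine posDef_submatrix_inj hPD ?_
      intro i j h
      have h2 : ((i : ↥s) : V) = ((j : ↥s) : V) :=
        congrArg (fun w : {j // j ∈ t'} => (w : V)) h
      exact Subtype.ext (Subtype.ext h2)
    obtain ⟨Y', hY'pd, hY'sym, hY'diag, hY'edge⟩ := IH ↥s G' hcard' hch' X' hsym' hcl'
    set nb : Finset ↥s := Finset.univ.filter (fun u => G.Adj ↑u v) with hnb
    set K : Finset V := insert v (nb.image Subtype.val) with hK
    have hmemnb : ∀ u : {i // i ∈ nb}, G.Adj ↑↑u v := fun u => (Finset.mem_filter.mp u.2).2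
    have hKcl : G.IsClique (K : Set V) := by
      intro p hp q hq hpq
      simp only [hK, Finset.coe_insert, Set.mem_insert_iff, Finset.coe_image,
        Set.mem_image, Finset.mem_coe] at hp hq
      rcases hp with rfl | ⟨u1, hu1, rfl⟩
      · rcases hq with rfl | ⟨u2, hu2, rfl⟩
        · exact absurd rfl hpq
        · exact ((Finset.mem_filter.mp hu2).2).symm
      · rcases hq with rfl | ⟨u2, hu2, rfl⟩
        · exact (Finset.mem_filter.mp hu1).2
        · exact hv _ _ ((Finset.mem_filter.mp hu1).2).symm
            ((Finset.mem_filter.mp hu2).2).symm hpq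
    have hKpd := hcl K hKcl
    set b : {i // i ∈ nb} → ℝ := fun u => X ↑↑u v with hb
    have hBX : ∀ i j : {u // u ∈ nb}, Y' ↑i ↑j = X ↑↑i ↑↑j := by
      intro i j
      by_cases hij : (i : ↥s) = j
      · rw [hij]
        exact hY'diag _
      · have hadj : G.Adj ↑↑i ↑↑j :=
          hv _ _ (hmemnb i).symm (hmemnb j).symm (fun h => hij (Subtype.ext h))
        exact hY'edge _ _ hadj
    set f : {u // u ∈ nb} ⊕ Unit → {i // i ∈ K} :=
      Sum.elim (fun u => ⟨↑↑u, by
        rw [hK]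
        exact Finset.mem_insert_of_mem (Finset.mem_image_of_mem _ u.2)⟩)
        (fun _ => ⟨v, by rw [hK]; exact Finset.mem_insert_self _ _⟩) with hf
    have hfinj : Function.Injective f := by
      rintro (p | p) (q | q) h
      · rw [hf] at h
        simp only [Sum.elim_inl, Subtype.mk.injEq] at h
        exact congrArg Sum.inl (Subtype.ext (Subtype.ext h))
      · rw [hf] at h
        simp only [Sum.elim_inl, Sum.elim_inr, Subtype.mk.injEq] at h
        exact absurd h (p : ↥s).2
      · rw [hf] at h
        simp only [Sum.elim_inl, Sum.elim_inr, Subtype.mk.injEq] at h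
        exact absurd h.symm (q : ↥s).2
      · exact congrArg Sum.inr rfl
    have hblockeq : Matrix.fromBlocks (Y'.submatrix Subtype.val Subtype.val)
        (Matrix.of fun u (_ : Unit) => b u) (Matrix.of fun (_ : Unit) u => b u)
        (Matrix.of fun _ _ => X v v) =
        (X.submatrix (Subtype.val : {i // i ∈ K} → V) Subtype.val).submatrix f f := by
      ext i j
      rcases i with i | i <;> rcases j with j | j
      · show Y' ↑i ↑j = X ↑↑i ↑↑j
        exact hBX i j
      · show b i = X ↑↑i v
        rfl
      · show X ↑↑j v = X v ↑↑j
        exact hsym.apply v ↑↑j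
      · rfl
    have hblockpd : (Matrix.fromBlocks (Y'.submatrix Subtype.val Subtype.val)
        (Matrix.of fun u (_ : Unit) => b u) (Matrix.of fun (_ : Unit) u => b u)
        (Matrix.of fun _ _ => X v v)).PosDef := by
      rw [hblockeq]
      exact posDef_submatrix_inj hKpd hfinj
    obtain ⟨y, hyb, hFpd⟩ := border_lemma hY'pd hY'sym nb b (X v v) hblockpd
    set e : V → ↥s ⊕ Unit := fun u => if h : u = v then Sum.inr () else Sum.inl ⟨u, h⟩ with he
    have heinj : Function.Injective e := by
      intro p q h
      by_cases hp : p = v <;> by_cases hq : q = v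
      · rw [hp, hq]
      · rw [he] at h
        simp only [dif_pos hp, dif_neg hq] at h
        exact absurd h (by simp)
      · rw [he] at h
        simp only [dif_neg hp, dif_pos hq] at h
        exact absurd h (by simp)
      · rw [he] at h
        simp only [dif_neg hp, dif_neg hq, Sum.inl.injEq, Subtype.mk.injEq] at h
        exact h
    set F := Matrix.fromBlocks Y' (Matrix.of fun i (_ : Unit) => y i)
      (Matrix.of fun (_ : Unit) i => y i) (Matrix.of fun _ _ => X v v) with hFdef
    have hFsym : F.IsSymm := by
      rw [Matrix.IsSymm, hFdef]
      ext i j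
      rcases i with i | i <;> rcases j with j | j <;>
        simp only [Matrix.transpose_apply, Matrix.fromBlocks_apply₁₁,
          Matrix.fromBlocks_apply₁₂, Matrix.fromBlocks_apply₂₁,
          Matrix.fromBlocks_apply₂₂, Matrix.of_apply] <;>
        try exact hY'sym.apply i j
    set Yfin : Matrix V V ℝ := F.submatrix e e with hYfin
    have hYpd : Yfin.PosDef := posDef_submatrix_inj hFpd heinj
    have hYsym : Yfin.IsSymm := by
      rw [Matrix.IsSymm, hYfin, Matrix.transpose_submatrix, hFsym.eq]
    have hev : e v = Sum.inr () := by rw [he]; simp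
    have hew : ∀ (u : V) (hu : u ≠ v), e u = Sum.inl ⟨u, hu⟩ := by
      intro u hu
      rw [he]
      simp [hu]
    refine ⟨Yfin, hYpd, hYsym, ?_, ?_⟩
    · intro i
      by_cases hi : i = v
      · subst hi
        show F (e i) (e i) = X i i
        rw [hev]
        rfl
      · show F (e i) (e i) = X i i
        rw [hew i hi]
        exact hY'diag ⟨i, hi⟩
    · intro i j hadj
      by_cases hi : i = v <;> by_cases hj : j = v
      · exact absurd (hi.trans hj.symm) hadj.ne
      · subst hi
        show F (e i) (e j) = X i j
        rw [hev, hew j hj]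
        show y ⟨j, hj⟩ = X i j
        have hjnb : (⟨j, hj⟩ : ↥s) ∈ nb := by
          rw [hnb]
          exact Finset.mem_filter.mpr ⟨Finset.mem_univ _, hadj.symm⟩
        have h3 := hyb ⟨⟨j, hj⟩, hjnb⟩
        rw [h3]
        show X j i = X i j
        exact hsym.apply i j
      · subst hj
        show F (e i) (e j) = X i j
        rw [hev, hew i hi]
        show y ⟨i, hi⟩ = X i j
        have hinb : (⟨i, hi⟩ : ↥s) ∈ nb := by
          rw [hnb]
          exact Finset.mem_filter.mpr ⟨Finset.mem_univ _, hadj⟩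
        exact hyb ⟨⟨i, hi⟩, hinb⟩
      · show F (e i) (e j) = X i j
        rw [hew i hi, hew j hj]
        exact hY'edge ⟨i, hi⟩ ⟨j, hj⟩ hadj

end Main


/-- Grone et al.: let `G = (V, F)` be a chordal specified-entry
pattern (with the whole diagonal specified).  If a partial symmetric matrix
`X̄` has positive definite principal submatrix `X̄_{C C}` for every maximal
clique `C` of `G`, then `X̄` admits a positive definite completion, i.e., a
positive definite symmetric matrix agreeing with `X̄` on the diagonal and on
all specified entries. -/
theorem chordal_posdef_completion {n : ℕ} (G : SimpleGraph (Fin n))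
    (hG : IsChordal G)
    (Xbar : Matrix (Fin n) (Fin n) ℝ) (hsym : Xbar.IsSymm)
    (hcliques : ∀ C : Finset (Fin n), IsMaximalClique G C →
      (principalSubmatrix Xbar C).PosDef) :
    ∃ X : Matrix (Fin n) (Fin n) ℝ, X.PosDef ∧ X.IsSymm ∧
      (∀ i, X i i = Xbar i i) ∧ ∀ i j, G.Adj i j → X i j = Xbar i j := by
  classical
  have hall : ∀ s : Finset (Fin n), G.IsClique (s : Set (Fin n)) →
      (Xbar.submatrix (Subtype.val : {i // i ∈ s} → Fin n) Subtype.val).PosDef := by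
    intro s hs
    have hfin : {t : Finset (Fin n) | G.IsClique (t : Set (Fin n)) ∧ s ⊆ t}.Finite :=
      Set.toFinite _
    obtain ⟨t, ⟨htc, hst⟩, htmax⟩ := Set.Finite.exists_maximalFor id _ hfin
      ⟨s, hs, Finset.Subset.refl s⟩
    have hmax : IsMaximalClique G t :=
      ⟨htc, fun t'' hc'' hsub => Finset.Subset.antisymm hsub (htmax ⟨hc'', hst.trans hsub⟩ hsub)⟩
    have hPD := hcliques t hmax
    have hre : Xbar.submatrix (Subtype.val : {i // i ∈ s} → Fin n) Subtype.val =
        (principalSubmatrix Xbar t).submatrix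
          (fun i : {i // i ∈ s} => (⟨↑i, hst i.2⟩ : {i // i ∈ t}))
          (fun i : {i // i ∈ s} => (⟨↑i, hst i.2⟩ : {i // i ∈ t})) := by
      ext i j
      rfl
    rw [hre]
    refine posDef_submatrix_inj hPD ?_
    intro i j h
    have h2 : (i : Fin n) = (j : Fin n) := congrArg (fun w : {i // i ∈ t} => (w : Fin n)) h
    exact Subtype.ext h2
  obtain ⟨Y, h1, h2, h3, h4⟩ := compAux (Fintype.card (Fin n)) (Fin n) G le_rfl hG
    Xbar hsym hall
  exact ⟨Y, h1, h2, h3, h4⟩
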